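/- Let U_L > 0, U_H > 0, 0 < M < 1, and 0 < w ≤ 1 be real numbers. Define g : ℝ → ℝ by g(β) = U_H·w·β − U_L·(1−w)·M/(1−β), and define β★ = max{0, min{1−M, 1 − √(M·(1−w)·U_L/(w·U_H))}} (where for w = 1 the square-root term is 0, so β★ = 1−M). Then for every β ∈ [0, 1−M], g(β) ≤ g(β★); i.e., g attains its maximum over the interval [0, 1−M] at β★. -/

import Mathlib

/-- Equation (8) of the paper: the function
`g(β) = U_H·w·β − U_L·(1−w)·M/(1−β)` attains its maximum over `[0, 1−M]` at
`β★ = max 0 (min (1−M) (1 − √(M·(1−w)·U_L/(w·U_H))))`. -/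
theorem total_util_maximizer (U_L U_H M w : ℝ)
    (hL : 0 < U_L) (hH : 0 < U_H) (hM0 : 0 < M) (hM1 : M < 1)
    (hw0 : 0 < w) (hw1 : w ≤ 1)
    (βs : ℝ)
    (hβs : βs = max 0 (min (1 - M) (1 - Real.sqrt (M * (1 - w) * U_L / (w * U_H))))) :
    ∀ β ∈ Set.Icc (0 : ℝ) (1 - M),
      U_H * w * β - U_L * (1 - w) * M / (1 - β) ≤
        U_H * w * βs - U_L * (1 - w) * M / (1 - βs) := by
  intro β hβ
  obtain ⟨hβ0, hβ1⟩ := hβ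
  set s := Real.sqrt (M * (1 - w) * U_L / (w * U_H)) with hs_def
  have hwH : 0 < w * U_H := mul_pos hw0 hH
  have hs0 : 0 ≤ s := Real.sqrt_nonneg _
  have harg : 0 ≤ M * (1 - w) * U_L / (w * U_H) := by
    apply div_nonneg _ hwH.le
    have : 0 ≤ 1 - w := by linarith
    positivity
  have hs2 : s ^ 2 = M * (1 - w) * U_L / (w * U_H) := Real.sq_sqrt harg
  have hd : U_L * (1 - w) * M = (w * U_H) * s ^ 2 := by
    rw [hs2]; field_simp
  have hβlt : 0 < 1 - β := by linarith
  rw [← sub_nonneg]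
  rcases le_or_gt s M with hsM | hMs
  · -- βs = 1 - M
    have hβs' : βs = 1 - M := by
      rw [hβs, min_eq_left (by linarith), max_eq_right (by linarith)]
    rw [hβs']
    have heq : U_H * w * (1 - M) - U_L * (1 - w) * M / (1 - (1 - M)) -
        (U_H * w * β - U_L * (1 - w) * M / (1 - β)) =
        w * U_H * ((1 - M - β) * ((1 - β) * M - s ^ 2)) / ((1 - β) * M) := by
      rw [hd]; field_simp [hM0.ne']; ring
    rw [heq]
    apply div_nonneg _ (by positivity)
    have h1 : 0 ≤ 1 - M - β := by linarith
    have h2 : 0 ≤ (1 - β) * M - s ^ 2 := by nlinarith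
    positivity
  · rcases le_or_gt 1 s with h1s | hs1
    · -- βs = 0
      have hβs' : βs = 0 := by
        rw [hβs, min_eq_right (by linarith), max_eq_left (by linarith)]
      rw [hβs']
      have heq : U_H * w * 0 - U_L * (1 - w) * M / (1 - 0) -
          (U_H * w * β - U_L * (1 - w) * M / (1 - β)) =
          w * U_H * (β * (s ^ 2 - (1 - β))) / (1 - β) := by
        rw [hd]; field_simp; ring
      rw [heq]
      apply div_nonneg _ hβlt.le
      have h2 : 0 ≤ s ^ 2 - (1 - β) := by nlinarith
      positivity
    · -- βs = 1 - s
      have hβs' : βs = 1 - s := by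
        rw [hβs, min_eq_right (by linarith), max_eq_right (by linarith)]
      rw [hβs']
      have hspos : 0 < s := by linarith
      have heq : U_H * w * (1 - s) - U_L * (1 - w) * M / (1 - (1 - s)) -
          (U_H * w * β - U_L * (1 - w) * M / (1 - β)) =
          w * U_H * (s * (1 - s - β) ^ 2) / ((1 - β) * s) := by
        rw [hd]; field_simp [hspos.ne']; ring
      rw [heq]
      positivity
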